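/- Let G be a finite simple undirected graph with threshold function τ : V(G) → ℕ satisfying τ(v) ≥ 1 for every vertex v, and let t be the size of a minimum vertex cover of G. Then for every nonempty seed set S ⊆ V(G), the diffusion process starting from S terminates in at most 2t rounds; that is, A[S, 2t] = influence_G(S). -/
import Mathlib


open scoped Classical

/-- The neighborhood of `u` in `G`, as a finset. -/
noncomputable def nbrs {V : Type*} [Fintype V] (G : SimpleGraph V) (u : V) : Finset V :=
  Finset.univ.filter (fun w => G.Adj u w)

/-- The diffusion process: `diffusion G τ S i` is the set `A[S,i]` of vertices
active after `i` rounds starting from seed set `S`. -/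
noncomputable def diffusion {V : Type*} [Fintype V] (G : SimpleGraph V) (τ : V → ℕ)
    (S : Finset V) : ℕ → Finset V
  | 0 => S
  | (i + 1) => diffusion G τ S i ∪
      Finset.univ.filter (fun u => τ u ≤ (nbrs G u ∩ diffusion G τ S i).card)

/-- The influence of a seed set `S`: all vertices eventually activated. -/
def influence {V : Type*} [Fintype V] (G : SimpleGraph V) (τ : V → ℕ) (S : Finset V) : Set V :=
  {v | ∃ i, v ∈ diffusion G τ S i}

/-- `S` is a target set if its influence is the whole vertex set. -/
def isTargetSet {V : Type*} [Fintype V] (G : SimpleGraph V) (τ : V → ℕ) (S : Finset V) : Prop :=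
  influence G τ S = Set.univ

/-- `C` is a vertex cover of `G`. -/
def isVertexCover {V : Type*} [Fintype V] (G : SimpleGraph V) (C : Finset V) : Prop :=
  ∀ u v, G.Adj u v → u ∈ C ∨ v ∈ C

section Aux

variable {V : Type*} [Fintype V] (G : SimpleGraph V) (τ : V → ℕ) (S : Finset V)

lemma diff_mono_succ (i : ℕ) : diffusion G τ S i ⊆ diffusion G τ S (i + 1) := by
  rw [diffusion]; exact Finset.subset_union_left

lemma diff_mono {i j : ℕ} (h : i ≤ j) : diffusion G τ S i ⊆ diffusion G τ S j := by
  induction j with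
  | zero => simp_all
  | succ j ih =>
    rcases Nat.eq_or_lt_of_le h with h' | h'
    · subst h'; rfl
    · exact (ih (Nat.lt_succ_iff.mp h')).trans (diff_mono_succ G τ S j)

lemma diff_fixed {i : ℕ} (h : diffusion G τ S (i + 1) = diffusion G τ S i)
    {j : ℕ} (hj : i ≤ j) : diffusion G τ S j = diffusion G τ S i := by
  induction j with
  | zero => simp_all
  | succ j ih =>
    rcases Nat.eq_or_lt_of_le hj with h' | h'
    · subst h'; rfl
    · have hj' := ih (Nat.lt_succ_iff.mp h')
      rw [diffusion, hj', ← diffusion, h]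

/-- If `u ∉ C` for a vertex cover `C`, all neighbors of `u` are in `C`. -/
lemma nbrs_subset_cover {C : Finset V} (hC : isVertexCover G C) {u : V} (hu : u ∉ C) :
    nbrs G u ⊆ C := by
  intro w hw
  rw [nbrs, Finset.mem_filter] at hw
  rcases hC u w hw.2 with h | h
  · exact absurd h hu
  · exact h

/-- Key lemma: if step `j+2` activates a new vertex, then `C ∩ A` strictly
grows from time `j` to time `j+2`. -/
lemma key_step {C : Finset V} (hC : isVertexCover G C) {j : ℕ}
    (hne : diffusion G τ S (j + 2) ≠ diffusion G τ S (j + 1)) :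
    C ∩ diffusion G τ S j ⊂ C ∩ diffusion G τ S (j + 2) := by
  have hsub : C ∩ diffusion G τ S j ⊆ C ∩ diffusion G τ S (j + 2) :=
    Finset.inter_subset_inter (Finset.Subset.refl C) (diff_mono G τ S (Nat.le_add_right j 2))
  refine Finset.ssubset_iff_subset_ne.mpr ⟨hsub, ?_⟩
  intro heq
  -- sandwich: C ∩ A(j+1) = C ∩ A j
  have h1 : C ∩ diffusion G τ S (j + 1) = C ∩ diffusion G τ S j := by
    apply Finset.Subset.antisymm
    · rw [heq]
      exact Finset.inter_subset_inter (Finset.Subset.refl C) (diff_mono_succ G τ S (j + 1))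
    · exact Finset.inter_subset_inter (Finset.Subset.refl C) (diff_mono_succ G τ S j)
  -- get the newly activated vertex
  obtain ⟨u, hu2, hu1⟩ := Finset.exists_of_ssubset
    (Finset.ssubset_iff_subset_ne.mpr ⟨diff_mono_succ G τ S (j + 1), hne.symm⟩)
  have hτu : τ u ≤ (nbrs G u ∩ diffusion G τ S (j + 1)).card := by
    rw [show j + 2 = (j + 1) + 1 from rfl, diffusion, Finset.mem_union] at hu2
    rcases hu2 with h | h
    · exact absurd h hu1
    · exact (Finset.mem_filter.mp h).2
  have huC : u ∉ C := by
    intro huC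
    have : u ∈ C ∩ diffusion G τ S j := by
      rw [heq]; exact Finset.mem_inter.mpr ⟨huC, hu2⟩
    exact hu1 (diff_mono G τ S (by omega) (Finset.mem_inter.mp this).2)
  have hnb : nbrs G u ⊆ C := nbrs_subset_cover G hC huC
  -- nbrs u ∩ A(j+1) ⊆ nbrs u ∩ A j
  have hss : nbrs G u ∩ diffusion G τ S (j + 1) ⊆ nbrs G u ∩ diffusion G τ S j := by
    intro w hw
    have hw' := Finset.mem_inter.mp hw
    have : w ∈ C ∩ diffusion G τ S j := by
      rw [← h1]; exact Finset.mem_inter.mpr ⟨hnb hw'.1, hw'.2⟩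
    exact Finset.mem_inter.mpr ⟨hw'.1, (Finset.mem_inter.mp this).2⟩
  -- so u would already be active at time j+1
  apply hu1
  rw [diffusion, Finset.mem_union]
  right
  exact Finset.mem_filter.mpr ⟨Finset.mem_univ u,
    hτu.trans (Finset.card_le_card hss)⟩

/-- If step 1 activates a new vertex, then `C ∩ A₁` is nonempty. -/
lemma base_step (hτ : ∀ v, 1 ≤ τ v) {C : Finset V} (hC : isVertexCover G C)
    (hne : diffusion G τ S 1 ≠ diffusion G τ S 0) :
    (C ∩ diffusion G τ S 1).Nonempty := by
  obtain ⟨u, hu1, hu0⟩ := Finset.exists_of_ssubset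
    (Finset.ssubset_iff_subset_ne.mpr ⟨diff_mono_succ G τ S 0, hne.symm⟩)
  have hτu : τ u ≤ (nbrs G u ∩ diffusion G τ S 0).card := by
    rw [show (1 : ℕ) = 0 + 1 from rfl, diffusion, Finset.mem_union] at hu1
    rcases hu1 with h | h
    · exact absurd h hu0
    · exact (Finset.mem_filter.mp h).2
  obtain ⟨v, hv⟩ := Finset.card_pos.mp (Nat.lt_of_lt_of_le (hτ u) hτu)
  have hv' := Finset.mem_inter.mp hv
  have hadj : G.Adj u v := (Finset.mem_filter.mp hv'.1).2
  rcases hC u v hadj with h | h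
  · exact ⟨u, Finset.mem_inter.mpr ⟨h, diff_mono G τ S (by omega) hu1⟩⟩
  · exact ⟨v, Finset.mem_inter.mpr ⟨h, diff_mono G τ S (by omega) hv'.2⟩⟩

end Aux

/-- If all thresholds are at least 1 and `t` is the minimum vertex cover number,
then diffusion from any nonempty seed set terminates within `2t` rounds. -/
theorem diffusion_terminates_in_two_vc {V : Type*} [Fintype V] (G : SimpleGraph V) (τ : V → ℕ)
    (hτ : ∀ v, 1 ≤ τ v) (t : ℕ) (C : Finset V)
    (hC : isVertexCover G C) (hcard : C.card = t)
    (hmin : ∀ C' : Finset V, isVertexCover G C' → t ≤ C'.card)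
    (S : Finset V) (hS : S.Nonempty) :
    influence G τ S = ↑(diffusion G τ S (2 * t)) := by
  -- Main claim: the process is fixed at time 2t.
  have hfix : diffusion G τ S (2 * t + 1) = diffusion G τ S (2 * t) := by
    by_contra hne
    -- then every step up to 2t+1 is active
    have hall : ∀ j, j ≤ 2 * t → diffusion G τ S (j + 1) ≠ diffusion G τ S j := by
      intro j hj heq
      apply hne
      have h1 := diff_fixed G τ S heq (show j ≤ 2 * t + 1 by omega)
      have h2 := diff_fixed G τ S heq (show j ≤ 2 * t from hj)
      rw [h1, h2]
    -- inductive count on odd times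
    have hcount : ∀ i, i ≤ t → i + 1 ≤ (C ∩ diffusion G τ S (2 * i + 1)).card := by
      intro i
      induction i with
      | zero =>
        intro _
        have h := base_step G τ S hτ hC (hall 0 (by omega))
        simpa [Finset.card_pos] using h
      | succ i ih =>
        intro hi
        have h1 := ih (by omega)
        have hkey := key_step G τ S hC (C := C)
          (j := 2 * i + 1) (hall (2 * i + 2) (by omega))
        have h2 := Finset.card_lt_card hkey
        have : 2 * i + 1 + 2 = 2 * (i + 1) + 1 := by ring
        rw [this] at h2
        omega
    have := hcount t le_rfl
    have hle : (C ∩ diffusion G τ S (2 * t + 1)).card ≤ C.card :=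
      Finset.card_le_card Finset.inter_subset_left
    omega
  ext v
  simp only [influence, Set.mem_setOf_eq, Finset.coe_sort_coe, Finset.mem_coe]
  constructor
  · rintro ⟨i, hi⟩
    rcases le_or_gt i (2 * t) with h | h
    · exact diff_mono G τ S h hi
    · have := diff_fixed G τ S hfix (show 2 * t ≤ i by omega)
      rw [this] at hi; exact hi
  · intro h; exact ⟨2 * t, h⟩
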